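/- Let F be a field and a₁,a₂,a₃,b₁,b₂,b₃ ∈ F³ with Δ(a₁,a₂,a₃) ≠ 0, satisfying the incidence conditions Δ(a₁,a₂,b₁) = 0, Δ(a₂,a₃,b₂) = 0, Δ(a₃,a₁,b₃) = 0, and such that the determinants Δ(b₁,a₂,b₂), Δ(b₁,a₃,b₃), Δ(b₁,a₂,b₃), Δ(b₁,a₃,b₂), Δ(a₁,a₂,b₂), Δ(a₂,a₃,b₃), Δ(a₃,a₁,b₁), Δ(a₁,a₂,b₃), Δ(a₂,a₃,b₁), Δ(a₃,a₁,b₂) are all nonzero. Then −[Δ(b₁,a₂,b₂)·Δ(b₁,a₃,b₃)] / [Δ(b₁,a₂,b₃)·Δ(b₁,a₃,b₂)] = [Δ(a₁,a₂,b₂)·Δ(a₂,a₃,b₃)·Δ(a₃,a₁,b₁)] / [Δ(a₁,a₂,b₃)·Δ(a₂,a₃,b₁)·Δ(a₃,a₁,b₂)]. -/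

import Mathlib

open Matrix

/-- `det3 x y z` is the determinant of the 3×3 matrix whose columns are `x`, `y`, `z`. -/
def det3 {F : Type*} [Field F] (x y z : Fin 3 → F) : F :=
  Matrix.det ((Matrix.of ![x, y, z])ᵀ)

/-- Explicit cofactor expansion of `det3`. -/
lemma det3_eq {F : Type*} [Field F] (x y z : Fin 3 → F) :
    det3 x y z = x 0 * (y 1 * z 2 - y 2 * z 1) - y 0 * (x 1 * z 2 - x 2 * z 1)
      + z 0 * (x 1 * y 2 - x 2 * y 1) := by
  rw [det3, Matrix.det_transpose]
  simp [Matrix.det_fin_three]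
  ring

/-- Cramer's rule in dimension 3. -/
lemma cramer3 {F : Type*} [Field F] (x y z b : Fin 3 → F) :
    det3 x y z • b = det3 b y z • x + det3 x b z • y + det3 x y b • z := by
  funext i
  fin_cases i <;>
    · simp only [det3_eq, Pi.add_apply, Pi.smul_apply, smul_eq_mul, Fin.zero_eta, Fin.mk_one,
        Fin.isValue, show (⟨2, by norm_num⟩ : Fin 3) = 2 from rfl]
      ring

/-- If `b` is on the plane spanned by `x` and `y` (with `x,y,z` a basis), then
`b` is a linear combination of `x` and `y`. -/
lemma decomp3 {F : Type*} [Field F] (x y z b : Fin 3 → F)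
    (h0 : det3 x y z ≠ 0) (hb : det3 x y b = 0) : ∃ p q : F, b = p • x + q • y := by
  refine ⟨det3 b y z / det3 x y z, det3 x b z / det3 x y z, ?_⟩
  have h := cramer3 x y z b
  rw [hb, zero_smul, add_zero] at h
  funext i
  have h' := congrFun h i
  simp only [Pi.add_apply, Pi.smul_apply, smul_eq_mul] at h' ⊢
  field_simp
  linear_combination h'

/-- **Lemma 3.8 of the paper**: for `a₁,a₂,a₃,b₁,b₂,b₃ ∈ F³` with `a₁,a₂,a₃` spanning,
`b₁` on the line `a₁a₂`, `b₂` on the line `a₂a₃`, `b₃` on the line `a₃a₁`, and all the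
relevant determinants nonzero, minus the cross-ratio of the projections of
`a₂,a₃,b₂,b₃` from `b₁` equals the triple ratio `r'₃(a₁,a₂,a₃,b₁,b₂,b₃)`. -/
theorem neg_crossRatio_eq_tripleRatio {F : Type*} [Field F]
    (a₁ a₂ a₃ b₁ b₂ b₃ : Fin 3 → F)
    (ha : det3 a₁ a₂ a₃ ≠ 0)
    (i₁ : det3 a₁ a₂ b₁ = 0) (i₂ : det3 a₂ a₃ b₂ = 0) (i₃ : det3 a₃ a₁ b₃ = 0)
    (n₁ : det3 b₁ a₂ b₂ ≠ 0) (n₂ : det3 b₁ a₃ b₃ ≠ 0)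
    (n₃ : det3 b₁ a₂ b₃ ≠ 0) (n₄ : det3 b₁ a₃ b₂ ≠ 0)
    (n₅ : det3 a₁ a₂ b₂ ≠ 0) (n₆ : det3 a₂ a₃ b₃ ≠ 0) (n₇ : det3 a₃ a₁ b₁ ≠ 0)
    (n₈ : det3 a₁ a₂ b₃ ≠ 0) (n₉ : det3 a₂ a₃ b₁ ≠ 0) (n₁₀ : det3 a₃ a₁ b₂ ≠ 0) :
    -(det3 b₁ a₂ b₂ * det3 b₁ a₃ b₃) / (det3 b₁ a₂ b₃ * det3 b₁ a₃ b₂) =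
      (det3 a₁ a₂ b₂ * det3 a₂ a₃ b₃ * det3 a₃ a₁ b₁) /
        (det3 a₁ a₂ b₃ * det3 a₂ a₃ b₁ * det3 a₃ a₁ b₂) := by
  -- cyclic invariance of the base determinant
  have hc₂ : det3 a₂ a₃ a₁ ≠ 0 := by
    intro h; exact ha (by rw [det3_eq] at h ⊢; linear_combination h)
  have hc₃ : det3 a₃ a₁ a₂ ≠ 0 := by
    intro h; exact ha (by rw [det3_eq] at h ⊢; linear_combination h)
  -- decompose `b₁, b₂, b₃` in the basis `a₁, a₂, a₃`
  obtain ⟨p, q, hb₁⟩ := decomp3 a₁ a₂ a₃ b₁ ha i₁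
  obtain ⟨r, s, hb₂⟩ := decomp3 a₂ a₃ a₁ b₂ hc₂ i₂
  obtain ⟨t, u, hb₃⟩ := decomp3 a₃ a₁ a₂ b₃ hc₃ i₃
  set D := det3 a₁ a₂ a₃ with hD
  -- compute all ten determinants in terms of the coefficients and `D`
  have e₁ : det3 b₁ a₂ b₂ = p * s * D := by
    rw [hb₁, hb₂, hD]; simp only [det3_eq, Pi.add_apply, Pi.smul_apply, smul_eq_mul]; ring
  have e₂ : det3 b₁ a₃ b₃ = q * u * D := by
    rw [hb₁, hb₃, hD]; simp only [det3_eq, Pi.add_apply, Pi.smul_apply, smul_eq_mul]; ring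
  have e₃ : det3 b₁ a₂ b₃ = p * t * D := by
    rw [hb₁, hb₃, hD]; simp only [det3_eq, Pi.add_apply, Pi.smul_apply, smul_eq_mul]; ring
  have e₄ : det3 b₁ a₃ b₂ = -(p * r * D) := by
    rw [hb₁, hb₂, hD]; simp only [det3_eq, Pi.add_apply, Pi.smul_apply, smul_eq_mul]; ring
  have e₅ : det3 a₁ a₂ b₂ = s * D := by
    rw [hb₂, hD]; simp only [det3_eq, Pi.add_apply, Pi.smul_apply, smul_eq_mul]; ring
  have e₆ : det3 a₂ a₃ b₃ = u * D := by
    rw [hb₃, hD]; simp only [det3_eq, Pi.add_apply, Pi.smul_apply, smul_eq_mul]; ring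
  have e₇ : det3 a₃ a₁ b₁ = q * D := by
    rw [hb₁, hD]; simp only [det3_eq, Pi.add_apply, Pi.smul_apply, smul_eq_mul]; ring
  have e₈ : det3 a₁ a₂ b₃ = t * D := by
    rw [hb₃, hD]; simp only [det3_eq, Pi.add_apply, Pi.smul_apply, smul_eq_mul]; ring
  have e₉ : det3 a₂ a₃ b₁ = p * D := by
    rw [hb₁, hD]; simp only [det3_eq, Pi.add_apply, Pi.smul_apply, smul_eq_mul]; ring
  have e₁₀ : det3 a₃ a₁ b₂ = r * D := by
    rw [hb₂, hD]; simp only [det3_eq, Pi.add_apply, Pi.smul_apply, smul_eq_mul]; ring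
  rw [e₃] at n₃; rw [e₈] at n₈; rw [e₉] at n₉; rw [e₁₀] at n₁₀
  have hp : p ≠ 0 := fun h => n₉ (by rw [h]; ring)
  have ht : t ≠ 0 := fun h => n₈ (by rw [h]; ring)
  have hr : r ≠ 0 := fun h => n₁₀ (by rw [h]; ring)
  rw [e₁, e₂, e₃, e₄, e₅, e₆, e₇, e₈, e₉, e₁₀]
  field_simp
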